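/- (Strictly negative price and intermediate net charge force simultaneous charge and discharge.) Consider the storage scheduling LP with η = η^C·η^D < 1 and a time period t with C_t < 0. If an optimal solution satisfies 0 ≤ s_t − ρ·s_{t−1} < Δt·η^C·P^C_max and p_t^D = 0 (no simultaneous charge and discharge at t), then it is not optimal: the modified solution that keeps the same state trajectory but sets p_t^{D'} = δ and p_t^{C'} = p_t^C + δ/(η^C·η^D), for any 0 < δ ≤ min{P^D_max, η^C·η^D·(P^C_max − p_t^C)}, is feasible and achieves objective value Z' = Z + Δt·C_t·δ·(1 − 1/η) > Z. Hence every optimal solution with net charge strictly between −Δt·(1/η^D)·P^D_max and Δt·η^C·P^C_max at a strictly-negative-price period exhibits simultaneous charge and discharge at that period. -/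

import Mathlib

open Finset

def feasible (T : ℕ) (Δt ρ ηC ηD Slb Sub Sinit PC PD : ℝ)
    (s pC pD : ℕ → ℝ) : Prop :=
  s 0 = Sinit ∧
  (∀ t ∈ Icc 1 T, s t = ρ * s (t - 1) + Δt * (ηC * pC t - (1 / ηD) * pD t)) ∧
  (∀ t ∈ Icc 1 T, Slb ≤ s t ∧ s t ≤ Sub) ∧
  (∀ t ∈ Icc 1 T, 0 ≤ pC t ∧ pC t ≤ PC) ∧
  (∀ t ∈ Icc 1 T, 0 ≤ pD t ∧ pD t ≤ PD)

def objective (T : ℕ) (Δt : ℝ) (C : ℕ → ℝ) (pC pD : ℕ → ℝ) : ℝ :=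
  ∑ t ∈ Icc 1 T, Δt * C t * (pD t - pC t)

def optimal (T : ℕ) (Δt ρ ηC ηD Slb Sub Sinit PC PD : ℝ) (C : ℕ → ℝ)
    (s pC pD : ℕ → ℝ) : Prop :=
  feasible T Δt ρ ηC ηD Slb Sub Sinit PC PD s pC pD ∧
  ∀ s' pC' pD', feasible T Δt ρ ηC ηD Slb Sub Sinit PC PD s' pC' pD' →
    objective T Δt C pC' pD' ≤ objective T Δt C pC pD

lemma perturb (T : ℕ) (Δt ρ ηC ηD Slb Sub Sinit PC PD : ℝ) (C : ℕ → ℝ)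
    (s pC pD : ℕ → ℝ) (t : ℕ) (ht : t ∈ Icc 1 T)
    (hf : feasible T Δt ρ ηC ηD Slb Sub Sinit PC PD s pC pD)
    (a b : ℝ) (hab : ηC * a - (1 / ηD) * b = 0)
    (hC0 : 0 ≤ pC t + a) (hC1 : pC t + a ≤ PC)
    (hD0 : 0 ≤ pD t + b) (hD1 : pD t + b ≤ PD) :
    feasible T Δt ρ ηC ηD Slb Sub Sinit PC PD s
        (fun u => if u = t then pC t + a else pC u)
        (fun u => if u = t then pD t + b else pD u) ∧
    objective T Δt C (fun u => if u = t then pC t + a else pC u)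
        (fun u => if u = t then pD t + b else pD u)
      = objective T Δt C pC pD + Δt * C t * (b - a) := by
  obtain ⟨h0, hdyn, hs, hpC, hpD⟩ := hf
  constructor
  · refine ⟨h0, ?_, hs, ?_, ?_⟩
    · intro u hu
      by_cases h : u = t
      · subst h
        simp only [if_pos rfl, if_true]
        have := hdyn u hu
        linear_combination this - Δt * hab
      · simp only [if_neg h]
        exact hdyn u hu
    · intro u hu
      by_cases h : u = t
      · subst h; simp only [if_pos rfl, if_true]; exact ⟨hC0, hC1⟩
      · simp only [if_neg h]; exact hpC u hu
    · intro u hu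
      by_cases h : u = t
      · subst h; simp only [if_pos rfl, if_true]; exact ⟨hD0, hD1⟩
      · simp only [if_neg h]; exact hpD u hu
  · unfold objective
    have hcong : ∀ u ∈ Icc 1 T,
        Δt * C u * ((if u = t then pD t + b else pD u) -
          (if u = t then pC t + a else pC u))
        = Δt * C u * (pD u - pC u) + (if u = t then Δt * C t * (b - a) else 0) := by
      intro u _
      by_cases h : u = t
      · subst h; simp only [if_pos rfl, if_true]; ring
      · simp only [if_neg h]; ring
    rw [Finset.sum_congr rfl hcong, Finset.sum_add_distrib,
      Finset.sum_ite_eq' (Icc 1 T) t, if_pos ht]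

set_option maxHeartbeats 1000000 in
theorem stmt6 (T : ℕ) (Δt ρ ηC ηD Slb Sub Sinit PC PD : ℝ) (C : ℕ → ℝ)
    (hΔt : 0 < Δt) (hρ0 : 0 < ρ) (hρ1 : ρ ≤ 1)
    (hηC0 : 0 < ηC) (hηC1 : ηC ≤ 1) (hηD0 : 0 < ηD) (hηD1 : ηD ≤ 1)
    (hη : ηC * ηD < 1) (hPC : 0 < PC) (hPD : 0 < PD)
    (t : ℕ) (ht : t ∈ Icc 1 T) (hCt : C t < 0) :
    (∀ s pC pD : ℕ → ℝ,
      feasible T Δt ρ ηC ηD Slb Sub Sinit PC PD s pC pD →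
      0 ≤ s t - ρ * s (t - 1) → s t - ρ * s (t - 1) < Δt * ηC * PC →
      pD t = 0 →
      ∀ δ : ℝ, 0 < δ → δ ≤ min PD (ηC * ηD * (PC - pC t)) →
        feasible T Δt ρ ηC ηD Slb Sub Sinit PC PD s
          (fun u => if u = t then pC t + δ / (ηC * ηD) else pC u)
          (fun u => if u = t then δ else pD u) ∧
        objective T Δt C (fun u => if u = t then pC t + δ / (ηC * ηD) else pC u)
            (fun u => if u = t then δ else pD u)
          = objective T Δt C pC pD + Δt * C t * δ * (1 - 1 / (ηC * ηD)) ∧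
        objective T Δt C pC pD <
          objective T Δt C (fun u => if u = t then pC t + δ / (ηC * ηD) else pC u)
            (fun u => if u = t then δ else pD u)) ∧
    (∀ s pC pD : ℕ → ℝ,
      optimal T Δt ρ ηC ηD Slb Sub Sinit PC PD C s pC pD →
      -(Δt * (1 / ηD) * PD) < s t - ρ * s (t - 1) →
      s t - ρ * s (t - 1) < Δt * ηC * PC →
      0 < pC t ∧ 0 < pD t) := by
  have hηpos : 0 < ηC * ηD := mul_pos hηC0 hηD0
  have hinv : 1 < 1 / (ηC * ηD) := by rw [lt_div_iff₀ hηpos]; nlinarith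
  -- Main perturbation claim used in both parts
  have key : ∀ s pC pD : ℕ → ℝ,
      feasible T Δt ρ ηC ηD Slb Sub Sinit PC PD s pC pD →
      pD t = 0 →
      ∀ δ : ℝ, 0 < δ → δ ≤ min PD (ηC * ηD * (PC - pC t)) →
        feasible T Δt ρ ηC ηD Slb Sub Sinit PC PD s
          (fun u => if u = t then pC t + δ / (ηC * ηD) else pC u)
          (fun u => if u = t then δ else pD u) ∧
        objective T Δt C (fun u => if u = t then pC t + δ / (ηC * ηD) else pC u)
            (fun u => if u = t then δ else pD u)
          = objective T Δt C pC pD + Δt * C t * δ * (1 - 1 / (ηC * ηD)) ∧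
        objective T Δt C pC pD <
          objective T Δt C (fun u => if u = t then pC t + δ / (ηC * ηD) else pC u)
            (fun u => if u = t then δ else pD u) := by
    intro s pC pD hf hpDt δ hδ hδle
    have hδPD : δ ≤ PD := le_trans hδle (min_le_left _ _)
    have hδPC : δ ≤ ηC * ηD * (PC - pC t) := le_trans hδle (min_le_right _ _)
    have hpCt := (hf.2.2.2.1 t ht).1
    have hab : ηC * (δ / (ηC * ηD)) - (1 / ηD) * δ = 0 := by
      field_simp; ring
    have hC0 : 0 ≤ pC t + δ / (ηC * ηD) := by positivity
    have hC1 : pC t + δ / (ηC * ηD) ≤ PC := by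
      have hd : δ / (ηC * ηD) ≤ PC - pC t := by
        rw [div_le_iff₀ hηpos]; nlinarith
      linarith
    have hD0 : 0 ≤ pD t + δ := by rw [hpDt]; linarith
    have hD1 : pD t + δ ≤ PD := by rw [hpDt]; linarith
    obtain ⟨hfeas', hobj'⟩ := perturb T Δt ρ ηC ηD Slb Sub Sinit PC PD C s pC pD t ht
      hf (δ / (ηC * ηD)) δ hab hC0 hC1 hD0 hD1
    have hfun : (fun u => if u = t then pD t + δ else pD u)
        = (fun u => if u = t then δ else pD u) := by
      funext u; rw [hpDt]; simp
    rw [hfun] at hfeas' hobj'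
    have heq : objective T Δt C (fun u => if u = t then pC t + δ / (ηC * ηD) else pC u)
        (fun u => if u = t then δ else pD u)
        = objective T Δt C pC pD + Δt * C t * δ * (1 - 1 / (ηC * ηD)) := by
      rw [hobj']; field_simp
    refine ⟨hfeas', heq, ?_⟩
    rw [heq]
    have hextra : 0 < Δt * C t * δ * (1 - 1 / (ηC * ηD)) := by
      have h1 : 1 - 1 / (ηC * ηD) < 0 := by linarith
      have : 0 < (-C t) * (-(1 - 1 / (ηC * ηD))) := by
        apply mul_pos <;> linarith
      nlinarith [mul_pos hΔt hδ]
    linarith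
  constructor
  · intro s pC pD hf _ _ hpDt δ hδ hδle
    exact key s pC pD hf hpDt δ hδ hδle
  · intro s pC pD hopt hlo hhi
    obtain ⟨hf, hmax⟩ := hopt
    have hdyn := hf.2.1 t ht
    have hpCb := hf.2.2.2.1 t ht
    have hpDb := hf.2.2.2.2 t ht
    have hnet : s t - ρ * s (t - 1) = Δt * (ηC * pC t - (1 / ηD) * pD t) := by
      rw [hdyn]; ring
    have hinvD : 0 < 1 / ηD := by positivity
    constructor
    · -- show 0 < pC t, by contradiction
      by_contra hc
      have hpCt : pC t = 0 := le_antisymm (not_lt.mp hc) hpCb.1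
      have hpDlt : pD t < PD := by
        rw [hnet, hpCt] at hlo
        nlinarith [mul_pos hΔt hinvD]
      set ε := min PC ((PD - pD t) / (ηC * ηD)) with hε
      have hεpos : 0 < ε := lt_min hPC (div_pos (by linarith) hηpos)
      have hε1 : ε ≤ PC := min_le_left _ _
      have hε2 : ε ≤ (PD - pD t) / (ηC * ηD) := min_le_right _ _
      have hab : ηC * ε - (1 / ηD) * (ηC * ηD * ε) = 0 := by field_simp; ring
      have hC0 : 0 ≤ pC t + ε := by rw [hpCt]; linarith
      have hC1 : pC t + ε ≤ PC := by rw [hpCt]; linarith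
      have hD0 : 0 ≤ pD t + ηC * ηD * ε := by nlinarith [hpDb.1]
      have hD1 : pD t + ηC * ηD * ε ≤ PD := by
        rw [le_div_iff₀ hηpos] at hε2; linarith [hε2]
      obtain ⟨hfeas', hobj'⟩ := perturb T Δt ρ ηC ηD Slb Sub Sinit PC PD C s pC pD t ht
        hf ε (ηC * ηD * ε) hab hC0 hC1 hD0 hD1
      have hle := hmax _ _ _ hfeas'
      rw [hobj'] at hle
      have : 0 < Δt * C t * (ηC * ηD * ε - ε) := by
        have h1 : ηC * ηD * ε - ε < 0 := by nlinarith
        nlinarith [mul_pos (mul_pos hΔt (neg_pos.2 hCt)) (neg_pos.2 h1)]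
      linarith
    · by_contra hc
      have hpDt : pD t = 0 := le_antisymm (not_lt.mp hc) hpDb.1
      have hpClt : pC t < PC := by
        rw [hnet, hpDt] at hhi
        nlinarith [mul_pos hΔt hηC0]
      set δ := min PD (ηC * ηD * (PC - pC t)) with hδd
      have hδpos : 0 < δ := lt_min hPD (by nlinarith)
      obtain ⟨hfeas', _, hlt⟩ := key s pC pD hf hpDt δ hδpos le_rfl
      have hle := hmax _ _ _ hfeas'
      linarith
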